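/- Let G be a permutation group of degree n, i.e. a subgroup of the symmetric group on a set Ω with |Ω| = n, and suppose G has exactly s orbits on Ω. Then every chief series of G has length at most n − s. -/

import Mathlib

namespace ChiefAux

variable {H : Type*} [Group H] {Ω : Type*}

/-- Orbit equivalence relation of a subgroup acting via a hom to permutations. -/
def orbSetoid (ρ : H →* Equiv.Perm Ω) (A : Subgroup H) : Setoid Ω where
  r x y := ∃ g ∈ A, ρ g x = y
  iseqv := by
    refine ⟨fun x => ⟨1, A.one_mem, by simp⟩, ?_, ?_⟩
    · rintro x y ⟨g, hg, h⟩
      exact ⟨g⁻¹, A.inv_mem hg, by simp [← h]⟩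
    · rintro x y z ⟨g, hg, h⟩ ⟨k, hk, h'⟩
      exact ⟨k * g, A.mul_mem hk hg, by simp [h, h']⟩

theorem orbSetoid_rel {ρ : H →* Equiv.Perm Ω} {A : Subgroup H} {x y : Ω} :
    (orbSetoid ρ A).r x y ↔ ∃ g ∈ A, ρ g x = y := Iff.rfl

/-- Number of orbits. -/
noncomputable def orbCount (ρ : H →* Equiv.Perm Ω) (A : Subgroup H) : ℕ :=
  Nat.card (Quotient (orbSetoid ρ A))

theorem orbCount_le_card [Finite Ω] (ρ : H →* Equiv.Perm Ω) (A : Subgroup H) :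
    orbCount ρ A ≤ Nat.card Ω :=
  Nat.card_le_card_of_surjective (Quotient.mk _) Quotient.mk_surjective

theorem orbCount_le_orbCount_of_rel_imp [Finite Ω] {ρ : H →* Equiv.Perm Ω} {A B : Subgroup H}
    (h : ∀ x y : Ω, (orbSetoid ρ A).r x y → (orbSetoid ρ B).r x y) :
    orbCount ρ B ≤ orbCount ρ A := by
  refine Nat.card_le_card_of_surjective (Quotient.map (fun x => x) h) ?_
  intro q
  obtain ⟨x, rfl⟩ := Quotient.exists_rep q
  exact ⟨Quotient.mk _ x, rfl⟩

theorem orbCount_le_orbCount [Finite Ω] (ρ : H →* Equiv.Perm Ω) {A B : Subgroup H} (hAB : A ≤ B) :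
    orbCount ρ B ≤ orbCount ρ A :=
  orbCount_le_orbCount_of_rel_imp (fun x y => by
    rintro ⟨g, hg, h⟩; exact ⟨g, hAB hg, h⟩)

theorem orbCount_eq_of_rel_iff [Finite Ω] {ρ : H →* Equiv.Perm Ω} {A B : Subgroup H}
    (h : ∀ x y : Ω, (orbSetoid ρ A).r x y ↔ (orbSetoid ρ B).r x y) :
    orbCount ρ A = orbCount ρ B :=
  le_antisymm (orbCount_le_orbCount_of_rel_imp (fun x y => (h x y).2))
    (orbCount_le_orbCount_of_rel_imp (fun x y => (h x y).1))

theorem orbCount_lt_card [Fintype Ω] {ρ : H →* Equiv.Perm Ω} {A : Subgroup H}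
    {g : H} (hg : g ∈ A) {x : Ω} (hx : ρ g x ≠ x) :
    orbCount ρ A < Fintype.card Ω := by
  have hle : orbCount ρ A ≤ Fintype.card Ω := by
    simpa [Nat.card_eq_fintype_card] using orbCount_le_card ρ A
  rcases lt_or_eq_of_le hle with h | h
  · exact h
  exfalso
  have hbij : Function.Bijective (Quotient.mk (orbSetoid ρ A)) := by
    refine Function.Surjective.bijective_of_nat_card_le Quotient.mk_surjective ?_
    rw [Nat.card_eq_fintype_card (α := Ω)]
    exact h.ge
  have : ρ g x = x := by
    have := hbij.1 (Quotient.sound ⟨g, hg, rfl⟩ : Quotient.mk (orbSetoid ρ A) x = Quotient.mk _ (ρ g x))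
    exact this.symm
  exact hx this

/-- The induced permutation action on the orbit space of a normal subgroup. -/
def blockPerm (ρ : H →* Equiv.Perm Ω) (N : Subgroup H) (hN : N.Normal) :
    H →* Equiv.Perm (Quotient (orbSetoid ρ N)) where
  toFun g := Quotient.congr (ρ g) (by
    intro a b
    constructor
    · rintro ⟨k, hk, h⟩
      exact ⟨g * k * g⁻¹, hN.conj_mem k hk g, by simp [← h]⟩
    · rintro ⟨k, hk, h⟩
      refine ⟨g⁻¹ * k * g, by simpa using hN.conj_mem k hk g⁻¹, ?_⟩
      have h2 : ρ g⁻¹ ((ρ k) ((ρ g) a)) = b := by rw [h]; simp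
      simpa [map_mul, Equiv.Perm.mul_apply] using h2)
  map_one' := by
    ext q
    obtain ⟨x, rfl⟩ := Quotient.exists_rep q
    show Quotient.mk _ (ρ 1 x) = Quotient.mk _ x
    rw [map_one]; rfl
  map_mul' g h := by
    ext q
    obtain ⟨x, rfl⟩ := Quotient.exists_rep q
    show Quotient.mk _ (ρ (g * h) x) = Quotient.mk _ (ρ g (ρ h x))
    rw [map_mul]; rfl

theorem blockPerm_apply_mk (ρ : H →* Equiv.Perm Ω) (N : Subgroup H) (hN : N.Normal)
    (g : H) (x : Ω) :
    blockPerm ρ N hN g (Quotient.mk _ x) = Quotient.mk _ (ρ g x) := rfl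

theorem mem_blockPerm_ker {ρ : H →* Equiv.Perm Ω} {N : Subgroup H} {hN : N.Normal} {g : H} :
    g ∈ (blockPerm ρ N hN).ker ↔ ∀ x : Ω, ∃ k ∈ N, ρ k x = ρ g x := by
  constructor
  · intro h x
    have : blockPerm ρ N hN g (Quotient.mk _ x) = Quotient.mk _ x := by
      rw [MonoidHom.mem_ker] at h
      rw [h]; rfl
    rw [blockPerm_apply_mk] at this
    obtain ⟨k, hk, hkx⟩ := Quotient.exact this
    refine ⟨k⁻¹, N.inv_mem hk, ?_⟩
    apply (ρ k).injective
    simp [map_inv, hkx]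
  · intro h
    rw [MonoidHom.mem_ker]
    ext q
    obtain ⟨x, rfl⟩ := Quotient.exists_rep q
    rw [blockPerm_apply_mk]
    obtain ⟨k, hk, hkx⟩ := h x
    exact (Quotient.sound (show (orbSetoid ρ N).r x ((ρ g) x) from ⟨k, hk, hkx⟩)).symm

theorem le_blockPerm_ker_self {ρ : H →* Equiv.Perm Ω} {N : Subgroup H} (hN : N.Normal) :
    N ≤ (blockPerm ρ N hN).ker := fun g hg =>
  mem_blockPerm_ker.2 fun x => ⟨g, hg, rfl⟩

theorem ker_le_blockPerm_ker {ρ : H →* Equiv.Perm Ω} {N : Subgroup H} (hN : N.Normal) :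
    ρ.ker ≤ (blockPerm ρ N hN).ker := fun g hg => by
  rw [MonoidHom.mem_ker] at hg
  exact mem_blockPerm_ker.2 fun x => ⟨1, N.one_mem, by simp [hg]⟩

/-- Counting orbits on the block space is the same as counting orbits on points,
for a subgroup containing the block subgroup. -/
theorem orbCount_blockPerm (ρ : H →* Equiv.Perm Ω) {N : Subgroup H} (hN : N.Normal)
    {A : Subgroup H} (hNA : N ≤ A) :
    orbCount (blockPerm ρ N hN) A = orbCount ρ A := by
  have wd1 : ∀ a b : Ω, (orbSetoid ρ N).r a b →
      Quotient.mk (orbSetoid ρ A) a = Quotient.mk (orbSetoid ρ A) b := by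
    rintro a b ⟨k, hk, hkx⟩
    exact Quotient.sound ⟨k, hNA hk, hkx⟩
  let F0 : Quotient (orbSetoid ρ N) → Quotient (orbSetoid ρ A) :=
    Quotient.lift (fun x => Quotient.mk (orbSetoid ρ A) x) wd1
  have wd2 : ∀ q r : Quotient (orbSetoid ρ N),
      (orbSetoid (blockPerm ρ N hN) A).r q r → F0 q = F0 r := by
    rintro q r ⟨g, hg, hgx⟩
    obtain ⟨x, rfl⟩ := Quotient.exists_rep q
    obtain ⟨y, rfl⟩ := Quotient.exists_rep r
    rw [blockPerm_apply_mk] at hgx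
    obtain ⟨k, hk, hky⟩ := Quotient.exact hgx
    exact Quotient.sound ⟨k * g, A.mul_mem (hNA hk) hg, by simp [Equiv.Perm.mul_apply, hky]⟩
  apply Nat.card_congr
  refine Equiv.ofBijective (Quotient.lift F0 wd2) ⟨?_, ?_⟩
  · intro q r hqr
    obtain ⟨q', rfl⟩ := Quotient.exists_rep q
    obtain ⟨r', rfl⟩ := Quotient.exists_rep r
    obtain ⟨x, rfl⟩ := Quotient.exists_rep q'
    obtain ⟨y, rfl⟩ := Quotient.exists_rep r'
    obtain ⟨g, hg, hgx⟩ := Quotient.exact hqr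
    apply Quotient.sound
    refine ⟨g, hg, ?_⟩
    rw [blockPerm_apply_mk]
    exact Quotient.sound ⟨1, N.one_mem, by simp [hgx]⟩
  · intro q
    obtain ⟨x, rfl⟩ := Quotient.exists_rep q
    exact ⟨Quotient.mk _ (Quotient.mk _ x), rfl⟩

/-- Dedekind modular law for subgroups, with the middle subgroup normal. -/
theorem dedekind {A C : Subgroup H} (B : Subgroup H) (hB : B.Normal) (hAC : A ≤ C) :
    (A ⊔ B) ⊓ C = A ⊔ (B ⊓ C) := by
  apply le_antisymm
  · rintro x ⟨hx1, hx2⟩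
    have : x ∈ (↑(A ⊔ B) : Set H) := hx1
    rw [Subgroup.mul_normal A B] at this
    obtain ⟨a, ha, b, hb, rfl⟩ := this
    exact Subgroup.mul_mem_sup ha ⟨hb, by simpa using C.mul_mem (C.inv_mem (hAC ha)) hx2⟩
  · exact le_inf (sup_le_sup_left inf_le_left A) (sup_le hAC inf_le_right)

def stabSub (ρ : H →* Equiv.Perm Ω) (ω : Ω) : Subgroup H :=
  (MulAction.stabilizer (Equiv.Perm Ω) ω).comap ρ

theorem mem_stabSub {ρ : H →* Equiv.Perm Ω} {ω : Ω} {g : H} :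
    g ∈ stabSub ρ ω ↔ ρ g ω = ω := by
  simp [stabSub, Subgroup.mem_comap, MulAction.mem_stabilizer_iff, Equiv.Perm.smul_def]

def stabPerm (ρ : H →* Equiv.Perm Ω) (ω : Ω) :
    ↥(stabSub ρ ω) →* Equiv.Perm {x : Ω // x ≠ ω} where
  toFun g := (ρ ↑g).subtypePerm (fun x => by
    have hg : ρ ↑g ω = ω := mem_stabSub.1 g.2
    constructor
    · intro hx h2
      rw [h2, hg] at hx
      exact hx rfl
    · intro hx h2
      exact hx ((ρ ↑g).injective (by rw [h2, hg])))
  map_one' := by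
    ext x
    simp
  map_mul' g h := by
    ext x
    simp
    rfl

theorem stabPerm_apply_coe (ρ : H →* Equiv.Perm Ω) (ω : Ω) (g : ↥(stabSub ρ ω))
    (x : {x : Ω // x ≠ ω}) : (stabPerm ρ ω g x : Ω) = ρ ↑g ↑x := rfl

section Counting

variable {ι : Type*} [Finite ι]

theorem card_subtype_mono {P Q : ι → Prop} (h : ∀ i, P i → Q i) :
    Nat.card {i // P i} ≤ Nat.card {i // Q i} :=
  Nat.card_le_card_of_injective (fun x => ⟨x.1, h x.1 x.2⟩)
    (fun a b hab => by simpa [Subtype.ext_iff] using hab)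

theorem card_subtype_split {P Q R : ι → Prop} (h : ∀ i, P i → Q i ∨ R i) :
    Nat.card {i // P i} ≤ Nat.card {i // Q i} + Nat.card {i // R i} := by
  classical
  rw [← Nat.card_sum]
  refine Nat.card_le_card_of_injective
    (fun x => if hq : Q x.1 then Sum.inl ⟨x.1, hq⟩ else Sum.inr ⟨x.1, (h x.1 x.2).resolve_left hq⟩)
    ?_
  intro a b hab
  by_cases ha : Q a.1 <;> by_cases hb : Q b.1 <;> simp [ha, hb] at hab <;>
    exact Subtype.ext hab

theorem forall_of_card_subtype_le {P Q : ι → Prop} (hQP : ∀ i, Q i → P i)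
    (hcard : Nat.card {i // P i} ≤ Nat.card {i // Q i}) : ∀ i, P i → Q i := by
  have inj : Function.Injective (fun x : {i // Q i} => (⟨x.1, hQP x.1 x.2⟩ : {i // P i})) :=
    fun a b hab => by simpa [Subtype.ext_iff] using hab
  have hbij := inj.bijective_of_nat_card_le hcard
  intro i hi
  obtain ⟨⟨j, hj⟩, hji⟩ := hbij.2 ⟨i, hi⟩
  obtain rfl : j = i := congrArg Subtype.val hji
  exact hj

theorem card_subtype_remove (P : ι → Prop) (i₀ : ι) :
    Nat.card {i // P i} ≤ Nat.card {i // P i ∧ i ≠ i₀} + 1 := by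
  classical
  have h1 : (1 : ℕ) = Nat.card PUnit.{1} := by simp
  rw [h1, ← Nat.card_sum]
  refine Nat.card_le_card_of_injective
    (fun x => if hq : x.1 = i₀ then Sum.inr PUnit.unit else Sum.inl ⟨x.1, x.2, hq⟩) ?_
  intro a b hab
  by_cases ha : a.1 = i₀ <;> by_cases hb : b.1 = i₀ <;> simp [ha, hb] at hab
  · exact Subtype.ext (ha.trans hb.symm)
  · exact Subtype.ext hab

end Counting

/-- Frattini-type lemma: if `E` lies in the block kernel and contains `N`, then
`E = N ⬝ (E ∩ stab ω)`. -/
theorem frattini_le {ρ : H →* Equiv.Perm Ω} {N : Subgroup H} {hN : N.Normal}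
    {E : Subgroup H} (hEK : E ≤ (blockPerm ρ N hN).ker) (hNE : N ≤ E) (ω : Ω) :
    E ≤ N ⊔ (E ⊓ stabSub ρ ω) := by
  intro x hx
  obtain ⟨k, hk, hkω⟩ := mem_blockPerm_ker.1 (hEK hx) ω
  have h1 : k⁻¹ * x ∈ E := E.mul_mem (E.inv_mem (hNE hk)) hx
  have h2 : k⁻¹ * x ∈ stabSub ρ ω := by
    rw [mem_stabSub, map_mul, map_inv, Equiv.Perm.mul_apply, ← hkω]
    simp
  have : x = k * (k⁻¹ * x) := by group
  rw [this]
  exact Subgroup.mul_mem_sup hk ⟨h1, h2⟩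

universe u' v'

/-- Main inductive lemma: for a monotone chain of normal subgroups of a group acting
on a finite set, the number of strict steps plus the number of orbits of the top
subgroup is at most the number of points, provided the kernel meets the top inside
the bottom. -/
theorem key : ∀ (ν : ℕ), ∀ {H : Type u'} [inst : Group H], ∀ {Ω : Type v'} [inst2 : Fintype Ω],
    ∀ (ρ : H →* Equiv.Perm Ω) (u : ℕ) (c : Fin (u + 1) → Subgroup H),
    Monotone c → (∀ i, (c i).Normal) → ρ.ker ⊓ c (Fin.last u) ≤ c 0 →
    Fintype.card Ω + Nat.card {i : Fin u // c i.castSucc < c i.succ} ≤ ν →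
    Nat.card {i : Fin u // c i.castSucc < c i.succ} + orbCount ρ (c (Fin.last u)) ≤
      Fintype.card Ω := by
  intro ν
  induction ν using Nat.strong_induction_on with
  | _ ν IH =>
  intro H _ Ω _ ρ u c hmono hnorm hker hν
  classical
  set t := Nat.card {i : Fin u // c i.castSucc < c i.succ} with ht
  have hsle : orbCount ρ (c (Fin.last u)) ≤ Fintype.card Ω := by
    rw [← Nat.card_eq_fintype_card]
    exact orbCount_le_card ρ _
  rcases Nat.eq_zero_or_pos t with ht0 | htpos
  · rw [ht0, zero_add]; exact hsle
  -- pick the first strict step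
  obtain ⟨i₁⟩ := (Nat.card_pos_iff.mp htpos).1
  obtain ⟨i₀, hi₀mem, hi₀min⟩ := Finset.exists_min_image
      (Finset.univ.filter fun i : Fin u => c i.castSucc < c i.succ) id
      ⟨i₁.1, by simp [i₁.2]⟩
  simp only [Finset.mem_filter, Finset.mem_univ, true_and] at hi₀mem
  have hi₀min' : ∀ j : Fin u, c j.castSucc < c j.succ → i₀ ≤ j := by
    intro j hj
    exact hi₀min j (by simp [hj])
  set N := c i₀.succ with hN
  have hNnormal : N.Normal := hnorm _
  have hNtop : N ≤ c (Fin.last u) := hmono (Fin.le_last _)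
  have hNker : ¬ N ≤ ρ.ker := by
    intro hNk
    have : N ≤ c i₀.castSucc :=
      (le_inf hNk hNtop).trans (hker.trans (hmono (Fin.zero_le _)))
    exact absurd (lt_of_lt_of_le hi₀mem this) (lt_irrefl _)
  obtain ⟨g₀, hg₀N, hg₀⟩ : ∃ g ∈ N, ρ g ≠ 1 := by
    by_contra hcon
    push_neg at hcon
    exact hNker fun g hg => by rw [MonoidHom.mem_ker]; exact hcon g hg
  obtain ⟨ω, hω⟩ : ∃ x : Ω, ρ g₀ x ≠ x := by
    by_contra hcon
    push_neg at hcon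
    exact hg₀ (Equiv.ext hcon)
  -- the block structure
  letI : Fintype (Quotient (orbSetoid ρ N)) := Fintype.ofFinite _
  set ρ' := blockPerm ρ N hNnormal with hρ'
  set K := ρ'.ker with hK
  have hKnormal : K.Normal := MonoidHom.normal_ker ρ'
  have hNK : N ≤ K := le_blockPerm_ker_self hNnormal
  have hn'count : Fintype.card (Quotient (orbSetoid ρ N)) = orbCount ρ N :=
    (Nat.card_eq_fintype_card).symm
  have hn' : Fintype.card (Quotient (orbSetoid ρ N)) < Fintype.card Ω := by
    rw [hn'count]
    exact orbCount_lt_card hg₀N hω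
  -- the two derived chains
  set e : Fin (u + 1) → Subgroup H := fun i => c i ⊓ K with he
  set f' : Fin (u + 1) → Subgroup H := fun i => c i ⊔ K with hf'
  have hemono : Monotone e := fun i j hij => inf_le_inf_right K (hmono hij)
  have hf'mono : Monotone f' := fun i j hij => sup_le_sup_right (hmono hij) K
  set tL := Nat.card {i : Fin u // e i.castSucc < e i.succ} with htL
  set tU := Nat.card {i : Fin u // f' i.castSucc < f' i.succ} with htU
  have hLle : tL ≤ t := card_subtype_mono (fun i hi => by
    rcases lt_or_eq_of_le (hmono (Fin.castSucc_le_succ i)) with h | h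
    · exact h
    · exact absurd (by rw [he]; simp only; rw [h]) (ne_of_lt hi))
  have hUle : tU ≤ t := card_subtype_mono (fun i hi => by
    rcases lt_or_eq_of_le (hmono (Fin.castSucc_le_succ i)) with h | h
    · exact h
    · exact absurd (by rw [hf']; simp only; rw [h]) (ne_of_lt hi))
  have hsplit : t ≤ tL + tU := by
    refine card_subtype_split (fun i hi => ?_)
    by_contra hcon
    push_neg at hcon
    obtain ⟨h1, h2⟩ := hcon
    have he_eq : e i.castSucc = e i.succ :=
      (lt_or_eq_of_le (hemono (Fin.castSucc_le_succ i))).resolve_left h1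
    have hf_eq : f' i.castSucc = f' i.succ :=
      (lt_or_eq_of_le (hf'mono (Fin.castSucc_le_succ i))).resolve_left h2
    simp only [he] at he_eq
    simp only [hf'] at hf_eq
    have hcle : c i.succ ≤ c i.castSucc := by
      have h3 : c i.succ ≤ (c i.castSucc ⊔ K) ⊓ c i.succ := by
        refine le_inf ?_ le_rfl
        have : c i.succ ≤ c i.succ ⊔ K := le_sup_left
        rwa [← hf_eq] at this
      have h4 : (c i.castSucc ⊔ K) ⊓ c i.succ = c i.castSucc ⊔ (K ⊓ c i.succ) :=
        dedekind K hKnormal (hmono (Fin.castSucc_le_succ i))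
      have h5 : K ⊓ c i.succ ≤ c i.castSucc := by
        rw [inf_comm, ← he_eq]
        exact inf_le_left
      calc c i.succ ≤ c i.castSucc ⊔ (K ⊓ c i.succ) := h3.trans (le_of_eq h4)
      _ ≤ c i.castSucc := sup_le le_rfl h5
    exact absurd hcle (not_le_of_gt hi)
  -- the upper bound from the action on blocks
  have hNtop' : N ≤ c (Fin.last u) := hNtop
  have hupper : tU + orbCount ρ (c (Fin.last u)) ≤ Fintype.card (Quotient (orbSetoid ρ N)) := by
    have hmeas : Fintype.card (Quotient (orbSetoid ρ N)) + tU < ν := by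
      have := lt_of_lt_of_le (Nat.add_lt_add_of_lt_of_le hn' hUle) hν
      exact this
    haveI : ∀ i : Fin (u+1), (c i ⊔ K).Normal := fun i => by
      haveI := hnorm i
      exact Subgroup.sup_normal (c i) K
    have h := IH _ hmeas ρ' u f' hf'mono (fun i => this i)
      (by
        rw [hf']
        simp only
        exact le_trans inf_le_left le_sup_right)
      le_rfl
    have hcount1 : orbCount ρ' (f' (Fin.last u)) = orbCount ρ' (c (Fin.last u)) := by
      refine orbCount_eq_of_rel_iff (fun x y => ?_)
      constructor
      · rintro ⟨g, hg, hgx⟩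
        have : g ∈ (↑(c (Fin.last u) ⊔ K) : Set H) := hg
        rw [Subgroup.mul_normal (c (Fin.last u)) K] at this
        obtain ⟨a, ha, k, hk, rfl⟩ := this
        refine ⟨a, ha, ?_⟩
        rw [← hgx, map_mul, Equiv.Perm.mul_apply]
        congr 1
        have : ρ' k = 1 := hk
        rw [this]
        rfl
      · rintro ⟨g, hg, hgx⟩
        exact ⟨g, le_sup_left (a := c (Fin.last u)) (b := K) hg, hgx⟩
    have hcount2 : orbCount ρ' (c (Fin.last u)) = orbCount ρ (c (Fin.last u)) :=
      orbCount_blockPerm ρ hNnormal hNtop'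
    rw [hcount1, hcount2] at h
    exact h
  -- case split on whether all strict steps survive in the lower chain
  rcases lt_or_eq_of_le hLle with hcase | hcase
  · -- some step strict only above: use the lower chain with induction on the length
    have hmeas : Fintype.card Ω + tL < ν :=
      lt_of_lt_of_le (by omega) hν
    haveI : ∀ i : Fin (u+1), (c i ⊓ K).Normal := fun i => by
      haveI := hnorm i
      exact Subgroup.normal_inf_normal (c i) K
    have hlow := IH _ hmeas ρ u e hemono (fun i => this i)
      (by
        rw [he]
        simp only
        refine le_inf ?_ ?_
        · exact le_trans (inf_le_inf_left _ inf_le_left) hker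
        · exact le_trans inf_le_left (ker_le_blockPerm_ker hNnormal))
      le_rfl
    have hn'le : Fintype.card (Quotient (orbSetoid ρ N)) ≤ orbCount ρ (e (Fin.last u)) := by
      rw [hn'count]
      refine orbCount_le_orbCount_of_rel_imp (fun x y => ?_)
      rintro ⟨g, hg, hgx⟩
      obtain ⟨k, hk, hkx⟩ := mem_blockPerm_ker.1 (inf_le_right (a := c (Fin.last u)) hg) x
      exact ⟨k, hk, by rw [hkx, hgx]⟩
    omega
  · -- all strict steps are strict in the lower chain: descend to a point stabilizer
    have hpoint : ∀ i : Fin u, c i.castSucc < c i.succ → e i.castSucc < e i.succ := by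
      refine forall_of_card_subtype_le (fun i hi => ?_) hcase.ge
      rcases lt_or_eq_of_le (hmono (Fin.castSucc_le_succ i)) with h | h
      · exact h
      · exact absurd (by rw [he]; simp only; rw [h]) (ne_of_lt hi)
    -- the moved point and its block partner
    have hyω : ρ g₀ ω ≠ ω := hω
    have hrelωy : (orbSetoid ρ N).r ω (ρ g₀ ω) := ⟨g₀, hg₀N, rfl⟩
    set St := stabSub ρ ω with hSt
    set ρs := stabPerm ρ ω with hρs
    set fc : Fin (u + 1) → Subgroup ↥St := fun i => (c i ⊓ K).subgroupOf St with hfc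
    have hfcmono : Monotone fc := fun i j hij =>
      Subgroup.comap_mono (inf_le_inf_right K (hmono hij))
    have hfcnorm : ∀ i, (fc i).Normal := fun i => by
      haveI := hnorm i
      exact (Subgroup.normal_inf_normal (c i) K).subgroupOf St
    set ts := Nat.card {i : Fin u // fc i.castSucc < fc i.succ} with hts
    have htsle : ts ≤ tL := card_subtype_mono (fun i hi => by
      rcases lt_or_eq_of_le (hemono (Fin.castSucc_le_succ i)) with h | h
      · exact h
      · exfalso
        apply ne_of_lt hi
        have h2 : c i.castSucc ⊓ K = c i.succ ⊓ K := by simpa [he] using h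
        rw [hfc]
        simp only
        rw [h2])
    have hcard_punct : Fintype.card {x : Ω // x ≠ ω} + 1 = Fintype.card Ω := by
      have h1 : Fintype.card {x : Ω // ¬ x = ω} = Fintype.card Ω - Fintype.card {x : Ω // x = ω} :=
        Fintype.card_subtype_compl _
      have h2 : Fintype.card {x : Ω // x = ω} = 1 := Fintype.card_subtype_eq ω
      have h3 : 1 ≤ Fintype.card Ω := Fintype.card_pos_iff.mpr ⟨ω⟩
      have h4 : Fintype.card {x : Ω // x ≠ ω} = Fintype.card {x : Ω // ¬ x = ω} := rfl
      omega
    -- kernel condition for the descent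
    have hkerfc : ρs.ker ⊓ fc (Fin.last u) ≤ fc 0 := by
      rintro γ ⟨hγk, hγl⟩
      have hγmem : (γ : H) ∈ c (Fin.last u) ⊓ K := hγl
      have hγ1 : ρ (γ : H) = 1 := by
        ext z
        by_cases hz : z = ω
        · rw [hz]
          simpa using mem_stabSub.1 γ.2
        · have h5 := congrArg Subtype.val (Equiv.ext_iff.1 (MonoidHom.mem_ker.1 hγk) ⟨z, hz⟩)
          simpa [hρs, stabPerm_apply_coe] using h5
      have h6 : (γ : H) ∈ c 0 := hker ⟨MonoidHom.mem_ker.2 hγ1, hγmem.1⟩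
      exact ⟨h6, hγmem.2⟩
    have hmeas : Fintype.card {x : Ω // x ≠ ω} + ts < ν := by omega
    have hdes := IH _ hmeas ρs u fc hfcmono hfcnorm hkerfc le_rfl
    -- the top of the descended chain still has at least as many orbits as there are blocks
    have hsurj : Fintype.card (Quotient (orbSetoid ρ N)) ≤ orbCount ρs (fc (Fin.last u)) := by
      rw [← Nat.card_eq_fintype_card]
      have wd : ∀ z w : {x : Ω // x ≠ ω}, (orbSetoid ρs (fc (Fin.last u))).r z w →
          Quotient.mk (orbSetoid ρ N) z.1 = Quotient.mk (orbSetoid ρ N) w.1 := by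
        rintro z w ⟨γ, hγ, hγz⟩
        have hval : ρ (γ : H) z.1 = w.1 := by
          have := congrArg Subtype.val hγz
          simpa [hρs, stabPerm_apply_coe] using this
        have hγK : (γ : H) ∈ K := (show (γ : H) ∈ c (Fin.last u) ⊓ K from hγ).2
        obtain ⟨k, hk, hkz⟩ := mem_blockPerm_ker.1 hγK z.1
        exact Quotient.sound ⟨k, hk, by rw [hkz, hval]⟩
      refine Nat.card_le_card_of_surjective (Quotient.lift
        (fun z : {x : Ω // x ≠ ω} => Quotient.mk (orbSetoid ρ N) z.1) wd) ?_
      intro q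
      obtain ⟨z, rfl⟩ := Quotient.exists_rep q
      by_cases hz : z = ω
      · refine ⟨Quotient.mk _ ⟨ρ g₀ ω, hyω⟩, ?_⟩
        rw [hz]
        exact (Quotient.sound hrelωy).symm
      · exact ⟨Quotient.mk _ ⟨z, hz⟩, rfl⟩
    -- removing the first strict step gives strict steps of the descended chain
    have hremove : t ≤ Nat.card {i : Fin u // (c i.castSucc < c i.succ) ∧ i ≠ i₀} + 1 :=
      card_subtype_remove _ i₀
    have hmono2 : Nat.card {i : Fin u // (c i.castSucc < c i.succ) ∧ i ≠ i₀} ≤ ts := by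
      refine card_subtype_mono (fun i hi => ?_)
      have hi₀lt : i₀ < i := lt_of_le_of_ne (hi₀min' i hi.1) (Ne.symm hi.2)
      have hsucc_le : i₀.succ ≤ i.castSucc := Fin.succ_le_castSucc_iff.mpr hi₀lt
      have hNle : N ≤ c i.castSucc := hmono hsucc_le
      have hestrict : e i.castSucc < e i.succ := hpoint i hi.1
      rcases lt_or_eq_of_le (hfcmono (Fin.castSucc_le_succ i)) with h | h
      · exact h
      · exfalso
        have hinf : (c i.castSucc ⊓ K) ⊓ St = (c i.succ ⊓ K) ⊓ St := by
          have := congrArg (Subgroup.map St.subtype) h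
          rwa [hfc, Subgroup.subgroupOf_map_subtype, Subgroup.subgroupOf_map_subtype] at this
        have hfle : c i.succ ⊓ K ≤ N ⊔ ((c i.succ ⊓ K) ⊓ St) :=
          frattini_le inf_le_right (le_inf (hmono (hsucc_le.trans (Fin.castSucc_le_succ i))) hNK) ω
        have hfle2 : c i.succ ⊓ K ≤ c i.castSucc ⊓ K := by
          refine hfle.trans ?_
          rw [← hinf]
          exact sup_le (le_inf hNle hNK) inf_le_left
        have : e i.succ ≤ e i.castSucc := by
          rw [he]; simp only; exact hfle2
        exact absurd hestrict (not_lt_of_ge this)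
    have hstop : orbCount ρ (c (Fin.last u)) ≤ Fintype.card (Quotient (orbSetoid ρ N)) := by
      rw [hn'count]
      exact orbCount_le_orbCount ρ hNtop
    omega
end ChiefAux


/-- Let `G` be a permutation group of degree `n` (a subgroup of the symmetric group on a
set `Ω` with `|Ω| = n`) with exactly `s` orbits on `Ω`. Then every chief series of `G`
has length at most `n - s`. -/
theorem chief_series_length_le_of_perm
    {Ω : Type*} [Fintype Ω] (G : Subgroup (Equiv.Perm Ω))
    (n : ℕ) (hn : n = Fintype.card Ω)
    (s : ℕ) (hs : s = Nat.card (MulAction.orbitRel.Quotient G Ω))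
    -- a chief series `⊥ = c 0 < c 1 < … < c u = ⊤` of `G` of length `u`
    (u : ℕ) (c : Fin (u + 1) → Subgroup G)
    (hc0 : c 0 = ⊥) (hctop : c (Fin.last u) = ⊤)
    (hcnormal : ∀ i, (c i).Normal)
    (hclt : ∀ i : Fin u, c i.castSucc < c i.succ)
    (hcchief : ∀ i : Fin u, ∀ M : Subgroup ↥G, M.Normal →
      c i.castSucc ≤ M → M ≤ c i.succ → M = c i.castSucc ∨ M = c i.succ) :
    u ≤ n - s := by
  classical
  have hmono : Monotone c := (Fin.strictMono_iff_lt_succ.mpr hclt).monotone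
  have hker : G.subtype.ker ⊓ c (Fin.last u) ≤ c 0 := by
    rw [Subgroup.ker_subtype]
    exact le_trans inf_le_left bot_le
  have hkey := ChiefAux.key (Fintype.card Ω + Nat.card {i : Fin u // c i.castSucc < c i.succ})
    G.subtype u c hmono hcnormal hker le_rfl
  have hT : Nat.card {i : Fin u // c i.castSucc < c i.succ} = u := by
    rw [Nat.card_congr (Equiv.subtypeUnivEquiv hclt), Nat.card_eq_fintype_card, Fintype.card_fin]
  have hS : ChiefAux.orbCount G.subtype (c (Fin.last u)) = s := by
    rw [hctop, hs]
    apply Nat.card_congr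
    refine Quotient.congrRight (fun x y => ?_)
    constructor
    · rintro ⟨g, -, hg⟩
      rw [MulAction.orbitRel_apply, MulAction.mem_orbit_iff]
      refine ⟨g⁻¹, ?_⟩
      rw [← hg]
      simp [Subgroup.smul_def, Equiv.Perm.smul_def]
    · intro h
      rw [MulAction.orbitRel_apply, MulAction.mem_orbit_iff] at h
      obtain ⟨g, hg⟩ := h
      refine ⟨g⁻¹, Subgroup.mem_top _, ?_⟩
      rw [← hg]
      simp [Subgroup.smul_def, Equiv.Perm.smul_def]
  rw [hT, hS] at hkey
  omega
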